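/- Let H ∈ ℝ^{n×n} be symmetric positive definite with eigenvalues μ₁,…,μ_n > 0, let α > 0, ε > 0, β₁, β₂ ∈ (0,1), s = α/ε, and assume (α/ε)·max_i μ_i·(1−β₁) < 2β₁ + 2. Then the spectral radius of the 3n×3n block matrix J with block rows [β₁ I, 0, (1−β₁)H], [0, β₂ I, 0], [−sβ₁ I, 0, I − s(1−β₁)H] is strictly less than 1. -/

import Mathlib

open Polynomial Matrix

/-- The Jacobian of the autonomous ADAM map at the fixed point `(0,0,wstar)`, as a
`3n × 3n` block matrix with block rows `[β₁ I, 0, (1−β₁)H]`, `[0, β₂ I, 0]`,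
`[−sβ₁ I, 0, I − s(1−β₁)H]`, where `H = ∇²f(wstar)` and `s = α/ε`. -/
noncomputable def adamJacobian {n : ℕ} (β₁ β₂ s : ℝ) (H : Matrix (Fin n) (Fin n) ℝ) :
    Matrix (Fin n ⊕ (Fin n ⊕ Fin n)) (Fin n ⊕ (Fin n ⊕ Fin n)) ℝ :=
  Matrix.fromBlocks
    (β₁ • (1 : Matrix (Fin n) (Fin n) ℝ))
    (Matrix.fromCols 0 ((1 - β₁) • H))
    (Matrix.fromRows 0 ((-(s * β₁)) • (1 : Matrix (Fin n) (Fin n) ℝ)))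
    (Matrix.fromBlocks (β₂ • (1 : Matrix (Fin n) (Fin n) ℝ)) 0 0
      ((1 : Matrix (Fin n) (Fin n) ℝ) - (s * (1 - β₁)) • H))

lemma quad_root_abs_lt_one {t b : ℝ} {z : ℂ} (hb0 : 0 < b) (hb1 : b < 1)
    (ht : |t| < 1 + b) (hz : z ^ 2 - (t : ℂ) * z + (b : ℂ) = 0) : ‖z‖ < 1 := by
  obtain ⟨htl, htr⟩ := abs_lt.mp ht
  have h1 : (z ^ 2 - (t : ℂ) * z + (b : ℂ)).re = 0 := by rw [hz]; rfl
  have h2 : (z ^ 2 - (t : ℂ) * z + (b : ℂ)).im = 0 := by rw [hz]; rfl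
  simp only [pow_two, Complex.mul_re, Complex.mul_im, Complex.sub_re, Complex.sub_im,
    Complex.add_re, Complex.add_im, Complex.ofReal_re, Complex.ofReal_im,
    zero_mul, mul_zero, sub_zero, add_zero, zero_sub, zero_add] at h1 h2
  have hlt : z.re ^ 2 + z.im ^ 2 < 1 := by
    rcases eq_or_ne z.im 0 with hy0 | hy0
    · rw [hy0] at h1 ⊢
      have hxlt : z.re < 1 := by
        by_contra hc
        push_neg at hc
        nlinarith [mul_nonneg (by linarith : (0:ℝ) ≤ z.re - 1) (by linarith : (0:ℝ) ≤ z.re - b)]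
      have hxgt : -1 < z.re := by
        by_contra hc
        push_neg at hc
        nlinarith [mul_nonneg (by linarith : (0:ℝ) ≤ -1 - z.re) (by linarith : (0:ℝ) ≤ -b - z.re)]
      nlinarith
    · have h2' : z.im * (2 * z.re - t) = 0 := by linarith [h2]
      have hx2 : 2 * z.re - t = 0 := by
        rcases mul_eq_zero.mp h2' with h | h
        · exact absurd h hy0
        · exact h
      nlinarith
  have habs : ‖z‖ ^ 2 = z.re ^ 2 + z.im ^ 2 := by
    rw [Complex.sq_norm, Complex.normSq_apply]; ring
  nlinarith [norm_nonneg z, sq_nonneg (‖z‖ - 1)]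

lemma exists_eigvec {m : Type*} [Fintype m] [DecidableEq m] {M : Matrix m m ℂ} {lam : ℂ}
    (h : lam ∈ spectrum ℂ M) : ∃ v : m → ℂ, v ≠ 0 ∧ M *ᵥ v = lam • v := by
  have h' := spectrum.mem_iff.mp h
  rw [Algebra.algebraMap_eq_smul_one] at h'
  have hdet : (lam • (1 : Matrix m m ℂ) - M).det = 0 := by
    by_contra hd
    exact h' ((Matrix.isUnit_iff_isUnit_det _).mpr (isUnit_iff_ne_zero.mpr hd))
  obtain ⟨v, hv, hveq⟩ := (Matrix.exists_mulVec_eq_zero_iff).mpr hdet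
  refine ⟨v, hv, ?_⟩
  rw [Matrix.sub_mulVec, Matrix.smul_mulVec, Matrix.one_mulVec, sub_eq_zero] at hveq
  exact hveq.symm

lemma charpoly_eval_eq_zero {m : Type*} [Fintype m] [DecidableEq m] (M : Matrix m m ℂ)
    {r : ℂ} {v : m → ℂ} (hv : v ≠ 0) (heig : M *ᵥ v = r • v) :
    M.charpoly.eval r = 0 := by
  have hdet : (r • (1 : Matrix m m ℂ) - M).det = 0 := by
    rw [← Matrix.exists_mulVec_eq_zero_iff]
    exact ⟨v, hv, by rw [Matrix.sub_mulVec, Matrix.smul_mulVec, Matrix.one_mulVec,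
      heig, sub_self]⟩
  rw [Matrix.charpoly, eval_det, Matrix.matPolyEquiv_charmatrix]
  simpa [Matrix.scalar, Matrix.scalar_apply, Matrix.smul_one_eq_diagonal, Pi.algebraMap_def] using hdet

/-- If `H` is symmetric positive definite with eigenvalues `μᵢ > 0` and
`(α/ε)·μᵢ·(1−β₁) < 2β₁ + 2` for every `i` (i.e. for the maximal eigenvalue), then the
spectral radius of the ADAM Jacobian is strictly less than `1`: every complex eigenvalue
has absolute value `< 1`. -/
theorem stmt4 {n : ℕ} (H : Matrix (Fin n) (Fin n) ℝ) (μ : Fin n → ℝ)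
    (hsymm : H.IsSymm) (hpd : H.PosDef) (hμ : ∀ i, 0 < μ i)
    (hchar : H.charpoly = ∏ i, (X - C (μ i)))
    (α ε β₁ β₂ : ℝ) (hα : 0 < α) (hε : 0 < ε)
    (hβ₁ : β₁ ∈ Set.Ioo (0 : ℝ) 1) (hβ₂ : β₂ ∈ Set.Ioo (0 : ℝ) 1)
    (hcond : ∀ i, α / ε * μ i * (1 - β₁) < 2 * β₁ + 2) :
    ∀ lam ∈ spectrum ℂ ((adamJacobian β₁ β₂ (α / ε) H).map (fun x : ℝ => (x : ℂ))),
      ‖lam‖ < 1 := by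
  intro lam hlam
  obtain ⟨hβ₁0, hβ₁1⟩ := hβ₁
  obtain ⟨hβ₂0, hβ₂1⟩ := hβ₂
  set s : ℝ := α / ε with hs
  have hspos : 0 < s := div_pos hα hε
  obtain ⟨v, hv0, hMv⟩ := exists_eigvec hlam
  -- the three block equations
  have E1 : ∀ i, ((1 : ℂ) - β₁) * (∑ x, (H i x : ℂ) * v (Sum.inr (Sum.inr x)))
      = (lam - β₁) * v (Sum.inl i) := by
    intro i
    have h1 := congrFun hMv (Sum.inl i)
    simp [adamJacobian, Matrix.mulVec, dotProduct, Fintype.sum_sum_type,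
      Matrix.one_apply, apply_ite Complex.ofReal, ite_mul, Finset.sum_ite_eq, sub_mul,
      Finset.sum_sub_distrib] at h1
    have hS : (∑ x, (β₁ : ℂ) * (H i x : ℂ) * v (Sum.inr (Sum.inr x)))
        = (β₁ : ℂ) * ∑ x, (H i x : ℂ) * v (Sum.inr (Sum.inr x)) := by
      rw [Finset.mul_sum]; exact Finset.sum_congr rfl fun x _ => by ring
    linear_combination h1 + hS
  have E2 : ∀ i, (β₂ : ℂ) = lam ∨ v (Sum.inr (Sum.inl i)) = 0 := by
    intro i
    have h2 := congrFun hMv (Sum.inr (Sum.inl i))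
    simp [adamJacobian, Matrix.mulVec, dotProduct, Fintype.sum_sum_type,
      Matrix.one_apply, apply_ite Complex.ofReal, ite_mul, Finset.sum_ite_eq, sub_mul,
      Finset.sum_sub_distrib] at h2
    exact h2
  have E3 : ∀ i, ((1 : ℂ) - lam) * v (Sum.inr (Sum.inr i))
      = (s : ℂ) * lam * v (Sum.inl i) := by
    intro i
    have h3 := congrFun hMv (Sum.inr (Sum.inr i))
    simp [adamJacobian, Matrix.mulVec, dotProduct, Fintype.sum_sum_type,
      Matrix.one_apply, apply_ite Complex.ofReal, ite_mul, Finset.sum_ite_eq, sub_mul,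
      Finset.sum_sub_distrib] at h3
    have hS : (∑ x, (s : ℂ) * (1 - (β₁ : ℂ)) * (H i x : ℂ) * v (Sum.inr (Sum.inr x)))
        = (s : ℂ) * (1 - (β₁ : ℂ)) * ∑ x, (H i x : ℂ) * v (Sum.inr (Sum.inr x)) := by
      rw [Finset.mul_sum]; exact Finset.sum_congr rfl fun x _ => by ring
    linear_combination h3 + hS + (s : ℂ) * E1 i
  -- case lam = β₂
  rcases eq_or_ne lam (β₂ : ℂ) with hlb | hlb
  · rw [hlb]
    simpa [Complex.norm_real, Real.norm_eq_abs, abs_of_pos hβ₂0] using hβ₂1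
  -- then b = 0
  have hb : ∀ i, v (Sum.inr (Sum.inl i)) = 0 := fun i =>
    (E2 i).resolve_left fun h => hlb h.symm
  -- case lam = 0
  rcases eq_or_ne lam 0 with hl0 | hl0
  · simp [hl0]
  have hsC : (s : ℂ) ≠ 0 := Complex.ofReal_ne_zero.mpr (ne_of_gt hspos)
  have hβC : (1 : ℂ) - β₁ ≠ 0 := by
    have : (β₁ : ℂ) ≠ 1 := by
      exact_mod_cast ne_of_lt hβ₁1
    intro h
    exact this (by linear_combination -h)
  -- c ≠ 0
  have hc : ∃ i, v (Sum.inr (Sum.inr i)) ≠ 0 := by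
    by_contra hcon
    push_neg at hcon
    apply hv0
    funext j
    rcases j with j | j | j
    · have h := (E3 j)
      rw [hcon j, mul_zero] at h
      rcases mul_eq_zero.mp h.symm with h' | h'
      · rcases mul_eq_zero.mp h' with h'' | h''
        · exact absurd h'' hsC
        · exact absurd h'' hl0
      · exact h'
    · exact hb j
    · exact hcon j
  obtain ⟨i₀, hi₀⟩ := hc
  -- eigen equation for c
  set ν : ℂ := (lam - β₁) * (1 - lam) / ((s : ℂ) * lam * (1 - β₁)) with hν
  have hden : (s : ℂ) * lam * ((1 : ℂ) - β₁) ≠ 0 := by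
    exact mul_ne_zero (mul_ne_zero hsC hl0) hβC
  have hHc : ∀ i, (∑ x, (H i x : ℂ) * v (Sum.inr (Sum.inr x)))
      = ν * v (Sum.inr (Sum.inr i)) := by
    intro i
    have key : ((s : ℂ) * lam * ((1 : ℂ) - β₁)) * (∑ x, (H i x : ℂ) * v (Sum.inr (Sum.inr x)))
        = (lam - β₁) * (1 - lam) * v (Sum.inr (Sum.inr i)) := by
      linear_combination (s : ℂ) * lam * E1 i - (lam - (β₁ : ℂ)) * E3 i
    rw [hν, div_mul_eq_mul_div, eq_div_iff hden]
    linear_combination key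
  -- c is an eigenvector of H.map with eigenvalue ν
  set c : Fin n → ℂ := fun i => v (Sum.inr (Sum.inr i)) with hcdef
  have hcne : c ≠ 0 := fun h => hi₀ (congrFun h i₀)
  have heig : (H.map (fun x : ℝ => (x : ℂ))) *ᵥ c = ν • c := by
    funext i
    simp only [Matrix.mulVec, dotProduct, Matrix.map_apply, Pi.smul_apply,
      smul_eq_mul, hcdef]
    exact hHc i
  have hroot : ((H.map (fun x : ℝ => (x : ℂ))).charpoly).eval ν = 0 :=
    charpoly_eval_eq_zero _ hcne heig
  have hcp : (H.map (fun x : ℝ => (x : ℂ))).charpoly = (H.charpoly).map Complex.ofRealHom :=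
    Matrix.charpoly_map H Complex.ofRealHom
  rw [hcp, hchar] at hroot
  have hroot' : (∏ i, (ν - (μ i : ℂ))) = 0 := by
    simpa [Polynomial.map_prod, Polynomial.map_sub, Polynomial.map_X, Polynomial.map_C,
      Polynomial.eval_prod] using hroot
  obtain ⟨i, -, hieq⟩ := Finset.prod_eq_zero_iff.mp hroot'
  have hνμ : ν = (μ i : ℂ) := by linear_combination hieq
  -- the quadratic equation
  have hquad : (lam - β₁) * (1 - lam) = (μ i : ℂ) * ((s : ℂ) * lam * (1 - β₁)) := by
    rw [hν] at hνμ
    field_simp at hνμ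
    linear_combination hνμ
  set t : ℝ := 1 + β₁ - s * (1 - β₁) * μ i with htdef
  have hz : lam ^ 2 - (t : ℂ) * lam + (β₁ : ℂ) = 0 := by
    rw [htdef]
    push_cast
    linear_combination -hquad
  have hμi := hμ i
  have hsm : 0 < s * (1 - β₁) * μ i := mul_pos (mul_pos hspos (by linarith)) hμi
  have ht : |t| < 1 + β₁ := by
    rw [abs_lt]
    constructor
    · have := hcond i
      rw [htdef]
      nlinarith
    · rw [htdef]; linarith
  exact quad_root_abs_lt_one hβ₁0 hβ₁1 ht hz
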